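/- Let X ∈ ℝ^{d_1×⋯×d_k} and δ = (δ_1,…,δ_k) ∈ (0,1]^k be such that δ_j ≥ max{‖P_j(X)u‖_{ℓ∞} : u ∈ ℝ^{d_j}, ‖u‖_{ℓ2} ≤ 1} for every j. Let W₀ ∈ ℝ^{d_1×⋯×d_k} satisfy Q⁰_X W₀ = W₀ and ‖W₀‖ ≤ 1 (spectral norm). Then for every W₁ ∈ ℝ^{d_1×⋯×d_k} with ‖W₁‖_{∘,δ} ≤ 2/(k(k−1)), one has ‖W₀ + Q_X^⊥ W₁‖_{∘,δ} ≤ 1. -/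

import Mathlib

open scoped BigOperators

namespace IncoherentTensor

variable {k : ℕ}

/-- A `k`-th order tensor in `ℝ^{d 1 × ⋯ × d k}`. -/
abbrev Tensor (d : Fin k → ℕ) : Type := (∀ j, Fin (d j)) → ℝ

variable {d : Fin k → ℕ}

/-- Entrywise inner product of tensors. -/
noncomputable def tinner (X Y : Tensor d) : ℝ := ∑ a : ∀ j, Fin (d j), X a * Y a

/-- Hilbert–Schmidt (entrywise ℓ2) norm. -/
noncomputable def hsNorm (X : Tensor d) : ℝ := Real.sqrt (tinner X X)

/-- Largest absolute entry. -/
noncomputable def maxNorm (X : Tensor d) : ℝ := ⨆ a, |X a|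

/-- Euclidean norm of a vector. -/
noncomputable def l2 {n : ℕ} (u : Fin n → ℝ) : ℝ := Real.sqrt (∑ i, u i ^ 2)

/-- Supremum norm of a vector. -/
noncomputable def linf {n : ℕ} (u : Fin n → ℝ) : ℝ := ⨆ i, |u i|

/-- Rank-one tensor `u_1 ⊗ ⋯ ⊗ u_k`. -/
def rankOne (u : ∀ j, Fin (d j) → ℝ) : Tensor d := fun a => ∏ j, u j (a j)

/-- Tensor spectral norm. -/
noncomputable def spectralNorm (X : Tensor d) : ℝ :=
  sSup {r | ∃ u : ∀ j, Fin (d j) → ℝ, (∀ j, l2 (u j) ≤ 1) ∧ r = tinner X (rankOne u)}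

/-- Tensor nuclear norm. -/
noncomputable def nuclearNorm (X : Tensor d) : ℝ :=
  sSup {r | ∃ Y : Tensor d, spectralNorm Y ≤ 1 ∧ r = tinner X Y}

/-- The set `U(δ)` of rank-one tensors satisfying the incoherence constraints in all but
two directions. -/
def Uset (δ : Fin k → ℝ) : Set (Tensor d) :=
  {Y | ∃ j1 j2 : Fin k, j1 < j2 ∧ ∃ u : ∀ j, Fin (d j) → ℝ,
    (∀ j, l2 (u j) ≤ 1) ∧ (∀ j, j ≠ j1 → j ≠ j2 → linf (u j) ≤ δ j) ∧ Y = rankOne u}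

/-- Incoherent spectral norm `‖X‖_{∘,δ}`. -/
noncomputable def onorm (δ : Fin k → ℝ) (X : Tensor d) : ℝ :=
  sSup {r | ∃ Y ∈ Uset (d := d) δ, r = tinner Y X}

/-- Incoherent nuclear norm `‖X‖_{⋆,δ}`. -/
noncomputable def starNorm (δ : Fin k → ℝ) (X : Tensor d) : ℝ :=
  sSup {r | ∃ Y : Tensor d, onorm δ Y ≤ 1 ∧ r = tinner Y X}

/-- The span `L_j(X)` of the mode-`j` fibers of `X`. -/
noncomputable def fiberSpan (X : Tensor d) (j : Fin k) :
    Submodule ℝ (EuclideanSpace ℝ (Fin (d j))) :=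
  Submodule.span ℝ {v | ∃ a : ∀ i, Fin (d i), v = fun i => X (Function.update a j i)}

/-- Tucker rank `r_j(X) = dim L_j(X)`. -/
noncomputable def tuckerRank (X : Tensor d) (j : Fin k) : ℕ :=
  Module.finrank ℝ (fiberSpan X j)

/-- Orthogonal projection `P_j(X)` of `ℝ^{d_j}` onto `L_j(X)`. -/
noncomputable def projMode (X : Tensor d) (j : Fin k) :
    EuclideanSpace ℝ (Fin (d j)) →L[ℝ] EuclideanSpace ℝ (Fin (d j)) :=
  (fiberSpan X j).subtypeL.comp ((fiberSpan X j).orthogonalProjection)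

/-- The matrix of `P_j(X)` in the standard basis. -/
noncomputable def Pmat (X : Tensor d) (j : Fin k) : Matrix (Fin (d j)) (Fin (d j)) ℝ :=
  Matrix.of fun a b => projMode X j (EuclideanSpace.single b 1) a

/-- Action of a Kronecker product `A_1 ⊗ ⋯ ⊗ A_k` of matrices on a tensor. -/
noncomputable def kronApply (A : ∀ j, Matrix (Fin (d j)) (Fin (d j)) ℝ) (W : Tensor d) :
    Tensor d :=
  fun a => ∑ b : ∀ j, Fin (d j), (∏ j, A j (a j) (b j)) * W b

/-- `Q⁰_X = P_1 ⊗ ⋯ ⊗ P_k`. -/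
noncomputable def Q0 (X : Tensor d) (W : Tensor d) : Tensor d :=
  kronApply (fun j => Pmat X j) W

/-- `Q_X = Q⁰_X + Σ_j P_1 ⊗ ⋯ ⊗ P_j^⊥ ⊗ ⋯ ⊗ P_k`. -/
noncomputable def QX (X : Tensor d) (W : Tensor d) : Tensor d :=
  Q0 X W + ∑ j : Fin k, kronApply (fun l => if l = j then 1 - Pmat X l else Pmat X l) W

/-- `Q_X^⊥ = I − Q_X`. -/
noncomputable def Qperp (X : Tensor d) (W : Tensor d) : Tensor d := W - QX X W

/-- Coherence `μ(U)` of a subspace of `ℝ^n`. -/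
noncomputable def coherence {n : ℕ} (U : Submodule ℝ (EuclideanSpace ℝ (Fin n))) : ℝ :=
  ((n : ℝ) / (Module.finrank ℝ U : ℝ)) *
    ⨆ i : Fin n, ‖U.orthogonalProjection (EuclideanSpace.single i 1)‖ ^ 2

/-- Probability of an event on a finite sample space, under the uniform distribution. -/
noncomputable def prob {Ω : Type*} [Fintype Ω] (P : Ω → Prop) : ℝ :=
  (Nat.card {ω : Ω // P ω} : ℝ) / (Fintype.card Ω : ℝ)

/-- `P_ω X` retains the entry `ω` of `X` and zeroes out the rest. -/
noncomputable def Pentry (ω : ∀ j, Fin (d j)) (X : Tensor d) : Tensor d :=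
  fun a => if a = ω then X a else 0

/-- `P_Ω X` retains the entries of `X` on `Ω` and zeroes out the rest. -/
noncomputable def POmega (S : Finset (∀ j, Fin (d j))) (X : Tensor d) : Tensor d :=
  fun a => if a ∈ S then X a else 0

/-- The empirical average `X̄ = (X_1 + ⋯ + X_n)/n` of `X_i = (d_1⋯d_k)·P_{ω_i} A`. -/
noncomputable def sampleAvg (A : Tensor d) (n : ℕ) (s : Fin n → ∀ j, Fin (d j)) : Tensor d :=
  fun a => (1 / (n : ℝ)) * ∑ i : Fin n, (∏ j, (d j : ℝ)) * Pentry (s i) A a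

/-- `Y` is `μ`-incoherent. -/
noncomputable def muIncoherent (μ : ℝ) (Y : Tensor d) : Prop :=
  ∀ j, ∀ u : EuclideanSpace ℝ (Fin (d j)), ‖u‖ ≤ 1 →
    linf (fun i => projMode Y j u i) ≤ Real.sqrt (μ * (tuckerRank Y j : ℝ) / (d j : ℝ))



section AuxLemmas

variable {k : ℕ} {d : Fin k → ℕ}

lemma abs_le_l2 {n : ℕ} (u : Fin n → ℝ) (i : Fin n) : |u i| ≤ l2 u := by
  rw [l2, ← Real.sqrt_sq_eq_abs]
  apply Real.sqrt_le_sqrt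
  exact Finset.single_le_sum (fun j _ => sq_nonneg (u j)) (Finset.mem_univ i)

lemma l2_nonneg {n : ℕ} (u : Fin n → ℝ) : 0 ≤ l2 u := Real.sqrt_nonneg _

lemma l2_eq_norm {n : ℕ} (u : Fin n → ℝ) :
    l2 u = ‖(WithLp.toLp 2 u : EuclideanSpace ℝ (Fin n))‖ := by
  rw [EuclideanSpace.norm_eq]
  simp only [l2, Real.norm_eq_abs, sq_abs, WithLp.ofLp_toLp]

lemma l2_smul {n : ℕ} {c : ℝ} (hc : 0 ≤ c) (u : Fin n → ℝ) : l2 (c • u) = c * l2 u := by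
  simp only [l2, Pi.smul_apply, smul_eq_mul, mul_pow]
  rw [← Finset.mul_sum, Real.sqrt_mul (sq_nonneg c), Real.sqrt_sq hc]

lemma l2_eq_zero {n : ℕ} {u : Fin n → ℝ} (h : l2 u = 0) : u = 0 := by
  have h2 : ‖(WithLp.toLp 2 u : EuclideanSpace ℝ (Fin n))‖ = 0 := by rw [← l2_eq_norm]; exact h
  have h3 : (WithLp.toLp 2 u : EuclideanSpace ℝ (Fin n)) = 0 := norm_eq_zero.mp h2
  simpa using h3

lemma tinner_comm (X Y : Tensor d) : tinner X Y = tinner Y X := by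
  simp [tinner, mul_comm]

lemma tinner_add_right (X Y Z : Tensor d) : tinner X (Y + Z) = tinner X Y + tinner X Z := by
  simp [tinner, Pi.add_apply, mul_add, Finset.sum_add_distrib]

lemma tinner_mul_fun (W : Tensor d) (c : ℝ) (R : Tensor d) :
    tinner W (fun a => c * R a) = c * tinner W R := by
  simp only [tinner, Finset.mul_sum]
  exact Finset.sum_congr rfl fun a _ => by ring

lemma tinner_kron (A : ∀ j, Matrix (Fin (d j)) (Fin (d j)) ℝ)
    (hA : ∀ j a b, A j a b = A j b a) (W Z : Tensor d) :
    tinner (kronApply A W) Z = tinner W (kronApply A Z) := by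
  unfold tinner kronApply
  simp only [Finset.sum_mul, Finset.mul_sum]
  rw [Finset.sum_comm]
  apply Finset.sum_congr rfl
  intro b _
  apply Finset.sum_congr rfl
  intro a _
  have : ∏ j, A j (a j) (b j) = ∏ j, A j (b j) (a j) :=
    Finset.prod_congr rfl (fun j _ => hA j _ _)
  rw [this]
  ring

lemma kron_rankOne (A : ∀ j, Matrix (Fin (d j)) (Fin (d j)) ℝ) (u : ∀ j, Fin (d j) → ℝ) :
    kronApply A (rankOne u) = rankOne (fun j => (A j).mulVec (u j)) := by
  funext a
  unfold kronApply rankOne Matrix.mulVec dotProduct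
  rw [Finset.prod_univ_sum]
  rw [Fintype.piFinset_univ]
  apply Finset.sum_congr rfl
  intro b _
  rw [Finset.prod_mul_distrib]

lemma rankOne_smul (c : Fin k → ℝ) (v : ∀ j, Fin (d j) → ℝ) :
    rankOne (fun j => c j • v j) = fun a => (∏ j, c j) * rankOne v a := by
  funext a
  simp [rankOne, Finset.prod_mul_distrib]

lemma rankOne_eq_zero {v : ∀ j, Fin (d j) → ℝ} (j0 : Fin k) (h : v j0 = 0) :
    rankOne v = fun _ => 0 := by
  funext a
  exact Finset.prod_eq_zero (Finset.mem_univ j0) (by rw [h]; rfl)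

lemma abs_rankOne_le_one {u : ∀ j, Fin (d j) → ℝ} (hu : ∀ j, l2 (u j) ≤ 1)
    (a : ∀ j, Fin (d j)) : |rankOne u a| ≤ 1 := by
  rw [rankOne, Finset.abs_prod]
  exact Finset.prod_le_one (fun j _ => abs_nonneg _)
    (fun j _ => (abs_le_l2 (u j) (a j)).trans (hu j))

lemma bddAbove_spectral (W : Tensor d) :
    BddAbove {r | ∃ u : ∀ j, Fin (d j) → ℝ, (∀ j, l2 (u j) ≤ 1) ∧ r = tinner W (rankOne u)} := by
  refine ⟨∑ a, |W a|, ?_⟩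
  rintro r ⟨u, hu, rfl⟩
  calc tinner W (rankOne u) ≤ ∑ a, |W a * rankOne u a| :=
        Finset.sum_le_sum (fun a _ => le_abs_self _)
    _ ≤ ∑ a, |W a| := by
        apply Finset.sum_le_sum
        intro a _
        rw [abs_mul]
        calc |W a| * |rankOne u a| ≤ |W a| * 1 :=
              mul_le_mul_of_nonneg_left (abs_rankOne_le_one hu a) (abs_nonneg _)
          _ = |W a| := mul_one _

lemma bddAbove_onorm (δ : Fin k → ℝ) (W : Tensor d) :
    BddAbove {r | ∃ Y ∈ Uset (d := d) δ, r = tinner Y W} := by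
  refine ⟨∑ a, |W a|, ?_⟩
  rintro r ⟨Y, ⟨j1, j2, _, u, hu, _, rfl⟩, rfl⟩
  calc tinner (rankOne u) W ≤ ∑ a, |rankOne u a * W a| :=
        Finset.sum_le_sum (fun a _ => le_abs_self _)
    _ ≤ ∑ a, |W a| := by
        apply Finset.sum_le_sum
        intro a _
        rw [abs_mul]
        calc |rankOne u a| * |W a| ≤ 1 * |W a| :=
              mul_le_mul_of_nonneg_right (abs_rankOne_le_one hu a) (abs_nonneg _)
          _ = |W a| := one_mul _

end AuxLemmas


section ProjLemmas

variable {k : ℕ} {d : Fin k → ℕ}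

lemma inner_single_one {n : ℕ} (x : EuclideanSpace ℝ (Fin n)) (a : Fin n) :
    @inner ℝ _ _ x (EuclideanSpace.single a (1:ℝ)) = x a := by
  rw [EuclideanSpace.inner_single_right]
  simp

lemma euclid_inner_eq_sum {n : ℕ} (x y : EuclideanSpace ℝ (Fin n)) :
    @inner ℝ _ _ x y = ∑ i, x i * y i := by
  rw [PiLp.inner_apply]
  simp [RCLike.inner_apply, starRingEnd_apply, star_trivial]
  exact Finset.sum_congr rfl fun i _ => mul_comm _ _

lemma inner_orthProj_left_eq_right {n : ℕ} (K : Submodule ℝ (EuclideanSpace ℝ (Fin n)))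
    (x y : EuclideanSpace ℝ (Fin n)) :
    @inner ℝ _ _ (↑(K.orthogonalProjection x) : EuclideanSpace ℝ (Fin n)) y
      = @inner ℝ _ _ x (↑(K.orthogonalProjection y) : EuclideanSpace ℝ (Fin n)) :=
  K.inner_starProjection_left_eq_right x y

lemma orth_entry_symm {n : ℕ} (K : Submodule ℝ (EuclideanSpace ℝ (Fin n))) (a b : Fin n) :
    (↑(K.orthogonalProjection (EuclideanSpace.single b 1)) : EuclideanSpace ℝ (Fin n)) a
      = (↑(K.orthogonalProjection (EuclideanSpace.single a 1)) : EuclideanSpace ℝ (Fin n)) b := by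
  rw [← inner_single_one (↑(K.orthogonalProjection (EuclideanSpace.single b 1))) a,
    inner_orthProj_left_eq_right, real_inner_comm, inner_single_one]

lemma projMode_eq (X : Tensor d) (j : Fin k) (w : EuclideanSpace ℝ (Fin (d j))) :
    projMode X j w = ↑((fiberSpan X j).orthogonalProjection w) := rfl

lemma Pmat_symm (X : Tensor d) (j : Fin k) (a b : Fin (d j)) :
    Pmat X j a b = Pmat X j b a := by
  show projMode X j (EuclideanSpace.single b 1) a = projMode X j (EuclideanSpace.single a 1) b
  rw [projMode_eq, projMode_eq]
  exact orth_entry_symm _ a b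

lemma Pmat_mulVec (X : Tensor d) (j : Fin k) (w : Fin (d j) → ℝ) (i : Fin (d j)) :
    (Pmat X j).mulVec w i
      = projMode X j (WithLp.toLp 2 w : EuclideanSpace ℝ (Fin (d j))) i := by
  have h1 : (Pmat X j).mulVec w i = ∑ b, Pmat X j b i * w b := by
    rw [Matrix.mulVec, dotProduct]
    exact Finset.sum_congr rfl fun b _ => by rw [Pmat_symm]
  rw [h1, projMode_eq]
  have h2 : ∑ b, Pmat X j b i * w b
      = @inner ℝ _ _ (↑((fiberSpan X j).orthogonalProjection (EuclideanSpace.single i 1)) :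
          EuclideanSpace ℝ (Fin (d j))) (WithLp.toLp 2 w : EuclideanSpace ℝ (Fin (d j))) := by
    rw [euclid_inner_eq_sum]
    rfl
  rw [h2, inner_orthProj_left_eq_right, real_inner_comm, inner_single_one]

lemma pmat_pyth (X : Tensor d) (j : Fin k) (w : Fin (d j) → ℝ) :
    l2 ((Pmat X j).mulVec w) ^ 2 + l2 (w - (Pmat X j).mulVec w) ^ 2 = l2 w ^ 2 := by
  set K := fiberSpan X j
  set pw : EuclideanSpace ℝ (Fin (d j)) := ↑(K.orthogonalProjection
    (WithLp.toLp 2 w : EuclideanSpace ℝ (Fin (d j)))) with hpw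
  have hmv : (Pmat X j).mulVec w = (pw : Fin (d j) → ℝ) := by
    funext i
    rw [Pmat_mulVec, projMode_eq]
  have hsub : l2 (w - (Pmat X j).mulVec w)
      = ‖(WithLp.toLp 2 w : EuclideanSpace ℝ (Fin (d j))) - pw‖ := by
    rw [hmv, l2_eq_norm]
    simp only [WithLp.toLp_sub, WithLp.toLp_ofLp]
  have hp : l2 ((Pmat X j).mulVec w) = ‖pw‖ := by
    rw [hmv, l2_eq_norm]
  rw [hsub, hp, l2_eq_norm]
  have horth : @inner ℝ _ _ pw ((WithLp.toLp 2 w : EuclideanSpace ℝ (Fin (d j))) - pw) = 0 := by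
    have hmem : (WithLp.toLp 2 w : EuclideanSpace ℝ (Fin (d j))) - pw ∈ Kᗮ :=
      Submodule.sub_starProjection_mem_orthogonal (K := K) _
    exact (Submodule.mem_orthogonal K _).mp hmem pw (K.orthogonalProjection _).2
  have hdecomp : (WithLp.toLp 2 w : EuclideanSpace ℝ (Fin (d j)))
      = pw + ((WithLp.toLp 2 w : EuclideanSpace ℝ (Fin (d j))) - pw) := by abel
  calc ‖pw‖ ^ 2 + ‖(WithLp.toLp 2 w : EuclideanSpace ℝ (Fin (d j))) - pw‖ ^ 2
      = ‖pw + ((WithLp.toLp 2 w : EuclideanSpace ℝ (Fin (d j))) - pw)‖ ^ 2 := by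
        rw [norm_add_sq_real, horth]
        ring
    _ = ‖(WithLp.toLp 2 w : EuclideanSpace ℝ (Fin (d j)))‖ ^ 2 := by rw [← hdecomp]

end ProjLemmas


section ScalarLemmas

-- telescoping
lemma tele (x y z : ℕ → ℝ) (h : ∀ i, z i = x i - y i) (m : ℕ) : ∀ n : ℕ,
    (∏ t ∈ Finset.Ico m n, x t) - ∏ t ∈ Finset.Ico m n, y t
      = ∑ p ∈ Finset.Ico m n, (∏ t ∈ Finset.Ico m p, y t) *
          (z p * ∏ t ∈ Finset.Ico (p+1) n, x t) := by
  intro n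
  induction n with
  | zero => simp
  | succ n ih =>
    by_cases hm : m ≤ n
    · rw [Finset.prod_Ico_succ_top hm, Finset.prod_Ico_succ_top hm,
        Finset.sum_Ico_succ_top hm]
      have hstep : ∀ p ∈ Finset.Ico m n,
          (∏ t ∈ Finset.Ico m p, y t) * (z p * ∏ t ∈ Finset.Ico (p+1) (n+1), x t)
            = ((∏ t ∈ Finset.Ico m p, y t) * (z p * ∏ t ∈ Finset.Ico (p+1) n, x t)) * x n := by
        intro p hp
        have hpn : p + 1 ≤ n := (Finset.mem_Ico.mp hp).2
        rw [Finset.prod_Ico_succ_top hpn]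
        ring
      rw [Finset.sum_congr rfl hstep, ← Finset.sum_mul, ← ih]
      have hIcoempty : Finset.Ico (n+1) (n+1) = ∅ := Finset.Ico_self _
      rw [hIcoempty]
      simp only [Finset.prod_empty]
      rw [h n]
      ring
    · have : Finset.Ico m (n+1) = ∅ := by
        apply Finset.Ico_eq_empty; omega
      simp [this]

lemma keyId (k : ℕ) (x y z : ℕ → ℝ) (h : ∀ i, z i = x i - y i) :
    (∏ t ∈ Finset.range k, x t) - (∏ t ∈ Finset.range k, y t)
      - ∑ p ∈ Finset.range k, ((∏ t ∈ Finset.Ico 0 p, y t) *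
          (z p * ∏ t ∈ Finset.Ico (p+1) k, y t))
    = ∑ p ∈ Finset.range k, ∑ p' ∈ Finset.Ico (p+1) k,
        (∏ t ∈ Finset.Ico 0 p, y t) * (z p *
          ((∏ t ∈ Finset.Ico (p+1) p', y t) * (z p' * ∏ t ∈ Finset.Ico (p'+1) k, x t))) := by
  rw [Finset.range_eq_Ico, tele x y z h 0 k]
  rw [← Finset.sum_sub_distrib]
  apply Finset.sum_congr rfl
  intro p hp
  have := tele x y z h (p+1) k
  rw [← mul_sub, ← mul_sub, this, Finset.mul_sum, Finset.mul_sum]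

lemma split5 (w : ℕ → ℝ) (p p' k : ℕ) (h1 : p < p') (h2 : p' < k) :
    ∏ t ∈ Finset.range k, w t
      = (∏ t ∈ Finset.Ico 0 p, w t) * (w p *
          ((∏ t ∈ Finset.Ico (p+1) p', w t) * (w p' * ∏ t ∈ Finset.Ico (p'+1) k, w t))) := by
  rw [Finset.range_eq_Ico,
    ← Finset.prod_Ico_consecutive w (Nat.zero_le p) (by omega : p ≤ k),
    ← Finset.prod_Ico_consecutive w (by omega : p ≤ p') (le_of_lt h2),
    Finset.prod_eq_prod_Ico_succ_bot (by omega : p < p'),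
    Finset.prod_eq_prod_Ico_succ_bot (h2)]
  ring

lemma split3 (w : ℕ → ℝ) (p k : ℕ) (hp : p < k) :
    ∏ t ∈ Finset.range k, w t
      = (∏ t ∈ Finset.Ico 0 p, w t) * (w p * ∏ t ∈ Finset.Ico (p+1) k, w t) := by
  rw [Finset.range_eq_Ico,
    ← Finset.prod_Ico_consecutive w (Nat.zero_le p) (le_of_lt hp),
    Finset.prod_eq_prod_Ico_succ_bot hp]

lemma pairSumConst (k : ℕ) (hk : 2 ≤ k) :
    ∑ p ∈ Finset.range k, ∑ _p' ∈ Finset.Ico (p+1) k, (2 / ((k:ℝ) * ((k:ℝ) - 1))) = 1 := by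
  have hB : ∀ p ∈ Finset.range k, ∑ _p' ∈ Finset.Ico (p+1) k, (2 / ((k:ℝ) * ((k:ℝ) - 1)))
      = ((k - (p+1) : ℕ) : ℝ) * (2 / ((k:ℝ) * ((k:ℝ) - 1))) := by
    intro p _
    rw [Finset.sum_const, Nat.card_Ico, nsmul_eq_mul]
  rw [Finset.sum_congr rfl hB, ← Finset.sum_mul, ← Nat.cast_sum]
  have hsum : ∑ p ∈ Finset.range k, (k - (p+1)) = ∑ p ∈ Finset.range k, p := by
    have := Finset.sum_range_reflect (fun i => i) k
    rw [← this]
    apply Finset.sum_congr rfl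
    intro p hp
    have := Finset.mem_range.mp hp
    omega
  rw [hsum]
  have hg : (∑ p ∈ Finset.range k, p) * 2 = k * (k - 1) := Finset.sum_range_id_mul_two k
  have hgR : ((∑ p ∈ Finset.range k, p : ℕ) : ℝ) * 2 = (k : ℝ) * ((k:ℝ) - 1) := by
    have h1 : ((k * (k-1) : ℕ) : ℝ) = (k:ℝ) * ((k:ℝ) - 1) := by
      push_cast [Nat.cast_sub (by omega : 1 ≤ k)]
      ring
    rw [← h1, ← hg]
    push_cast
    ring
  have hkpos : (0:ℝ) < (k:ℝ) * ((k:ℝ) - 1) := by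
    have : (2:ℝ) ≤ (k:ℝ) := by exact_mod_cast hk
    nlinarith
  have hk1 : (k:ℝ) - 1 ≠ 0 := by
    have : (2:ℝ) ≤ (k:ℝ) := by exact_mod_cast hk
    linarith
  field_simp
  push_cast at hgR ⊢
  linarith

lemma finalIneq (k : ℕ) (hk : 2 ≤ k) (aN bN : ℕ → ℝ) (ha : ∀ t, 0 ≤ aN t)
    (hb : ∀ t, 0 ≤ bN t) (h1 : ∀ t, t < k → aN t ^ 2 + bN t ^ 2 ≤ 1) :
    (∏ t ∈ Finset.range k, aN t)
      + ∑ p ∈ Finset.range k, ∑ p' ∈ Finset.Ico (p+1) k,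
          (bN p * bN p' * (2 / ((k:ℝ) * ((k:ℝ) - 1)))) ≤ 1 := by
  set B : ℝ := 2 / ((k:ℝ) * ((k:ℝ) - 1)) with hBdef
  have hkpos : (0:ℝ) < (k:ℝ) * ((k:ℝ) - 1) := by
    have : (2:ℝ) ≤ (k:ℝ) := by exact_mod_cast hk
    nlinarith
  have hB0 : 0 ≤ B := by positivity
  have haux : ∀ t, t < k → aN t ≤ 1 := by
    intro t ht
    nlinarith [h1 t ht, ha t, hb t, sq_nonneg (bN t)]
  -- per-pair bound on the product
  have hprod : ∀ p p', p < p' → p' < k → (∏ t ∈ Finset.range k, aN t) ≤ aN p * aN p' := by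
    intro p p' h1' h2'
    rw [split5 aN p p' k h1' h2']
    have hI1 : (∏ t ∈ Finset.Ico 0 p, aN t) ≤ 1 :=
      Finset.prod_le_one (fun t _ => ha t) (fun t ht => haux t (by
        have := Finset.mem_Ico.mp ht; omega))
    have hI2 : (∏ t ∈ Finset.Ico (p+1) p', aN t) ≤ 1 :=
      Finset.prod_le_one (fun t _ => ha t) (fun t ht => haux t (by
        have := Finset.mem_Ico.mp ht; omega))
    have hI3 : (∏ t ∈ Finset.Ico (p'+1) k, aN t) ≤ 1 :=
      Finset.prod_le_one (fun t _ => ha t) (fun t ht => haux t (by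
        have := Finset.mem_Ico.mp ht; omega))
    have hI1' : 0 ≤ (∏ t ∈ Finset.Ico 0 p, aN t) := Finset.prod_nonneg (fun t _ => ha t)
    have hI2' : 0 ≤ (∏ t ∈ Finset.Ico (p+1) p', aN t) := Finset.prod_nonneg (fun t _ => ha t)
    have hI3' : 0 ≤ (∏ t ∈ Finset.Ico (p'+1) k, aN t) := Finset.prod_nonneg (fun t _ => ha t)
    have hap := ha p
    have hap' := ha p'
    have hP12 : (∏ t ∈ Finset.Ico 0 p, aN t) * (∏ t ∈ Finset.Ico (p+1) p', aN t) ≤ 1 :=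
      mul_le_one₀ hI1 hI2' hI2
    have hP : (∏ t ∈ Finset.Ico 0 p, aN t) * (∏ t ∈ Finset.Ico (p+1) p', aN t)
        * (∏ t ∈ Finset.Ico (p'+1) k, aN t) ≤ 1 := mul_le_one₀ hP12 hI3' hI3
    nlinarith [mul_le_mul_of_nonneg_left hP (mul_nonneg hap hap')]
  have hPw : (∏ t ∈ Finset.range k, aN t)
      = ∑ p ∈ Finset.range k, ∑ p' ∈ Finset.Ico (p+1) k,
          ((∏ t ∈ Finset.range k, aN t) * B) := by
    have : ∑ p ∈ Finset.range k, ∑ p' ∈ Finset.Ico (p+1) k,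
        ((∏ t ∈ Finset.range k, aN t) * B)
        = (∏ t ∈ Finset.range k, aN t) * ∑ p ∈ Finset.range k, ∑ p' ∈ Finset.Ico (p+1) k, B := by
      rw [Finset.mul_sum]
      apply Finset.sum_congr rfl
      intro p _
      rw [Finset.mul_sum]
    rw [this, pairSumConst k hk, mul_one]
  calc (∏ t ∈ Finset.range k, aN t)
      + ∑ p ∈ Finset.range k, ∑ p' ∈ Finset.Ico (p+1) k, (bN p * bN p' * B)
      = ∑ p ∈ Finset.range k, ∑ p' ∈ Finset.Ico (p+1) k,
          ((∏ t ∈ Finset.range k, aN t) * B + bN p * bN p' * B) := by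
        have e1 : ∑ p ∈ Finset.range k, ∑ p' ∈ Finset.Ico (p+1) k,
            ((∏ t ∈ Finset.range k, aN t) * B + bN p * bN p' * B)
            = (∑ p ∈ Finset.range k, ∑ p' ∈ Finset.Ico (p+1) k,
                ((∏ t ∈ Finset.range k, aN t) * B))
              + ∑ p ∈ Finset.range k, ∑ p' ∈ Finset.Ico (p+1) k, (bN p * bN p' * B) := by
          rw [← Finset.sum_add_distrib]
          apply Finset.sum_congr rfl
          intro p _
          rw [← Finset.sum_add_distrib]
        rw [e1, ← hPw]
    _ ≤ ∑ p ∈ Finset.range k, ∑ p' ∈ Finset.Ico (p+1) k, B := by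
        apply Finset.sum_le_sum
        intro p hp
        apply Finset.sum_le_sum
        intro p' hp'
        have hpk := Finset.mem_range.mp hp
        have hpp' := Finset.mem_Ico.mp hp'
        have h2 : (∏ t ∈ Finset.range k, aN t) + bN p * bN p' ≤ 1 := by
          have := hprod p p' (by omega) (by omega)
          nlinarith [h1 p (by omega), h1 p' (by omega), sq_nonneg (aN p - aN p'),
            sq_nonneg (bN p - bN p'), ha p, ha p', hb p, hb p']
        nlinarith
    _ = 1 := pairSumConst k hk

end ScalarLemmas


section NormBounds

variable {k : ℕ} {d : Fin k → ℕ}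

lemma tinner_zero_fun (W : Tensor d) : tinner W (fun _ => (0:ℝ)) = 0 := by simp [tinner]

lemma tinner_zero_fun_left (W : Tensor d) : tinner (fun _ => (0:ℝ)) W = 0 := by simp [tinner]

lemma tinner_mul_fun_left (W : Tensor d) (c : ℝ) (R : Tensor d) :
    tinner (fun a => c * R a) W = c * tinner R W := by
  rw [tinner_comm, tinner_mul_fun, tinner_comm]

lemma spectral_le (W : Tensor d) (hW : spectralNorm W ≤ 1)
    (v : ∀ j, Fin (d j) → ℝ) (c : Fin k → ℝ) (hc0 : ∀ j, 0 ≤ c j)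
    (hvc : ∀ j, l2 (v j) ≤ c j) : tinner W (rankOne v) ≤ ∏ j, c j := by
  by_cases hz : ∃ j0, v j0 = 0
  · obtain ⟨j0, hj0⟩ := hz
    rw [rankOne_eq_zero j0 hj0, tinner_zero_fun]
    exact Finset.prod_nonneg (fun j _ => hc0 j)
  · push_neg at hz
    have hcpos : ∀ j, 0 < c j := by
      intro j
      rcases lt_or_eq_of_le (l2_nonneg (v j)) with h | h
      · exact lt_of_lt_of_le h (hvc j)
      · exact absurd (l2_eq_zero h.symm) (hz j)
    have hvv : (fun j => c j • ((c j)⁻¹ • v j)) = v := by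
      funext j
      rw [smul_smul, mul_inv_cancel₀ (ne_of_gt (hcpos j)), one_smul]
    have h1 : rankOne v = fun a => (∏ j, c j) * rankOne (fun j => (c j)⁻¹ • v j) a := by
      conv_lhs => rw [← hvv]
      exact rankOne_smul c _
    rw [h1, tinner_mul_fun]
    have hunit : ∀ j, l2 ((c j)⁻¹ • v j) ≤ 1 := by
      intro j
      rw [l2_smul (le_of_lt (inv_pos.mpr (hcpos j)))]
      calc (c j)⁻¹ * l2 (v j) ≤ (c j)⁻¹ * c j :=
            mul_le_mul_of_nonneg_left (hvc j) (le_of_lt (inv_pos.mpr (hcpos j)))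
        _ = 1 := inv_mul_cancel₀ (ne_of_gt (hcpos j))
    have hmem : tinner W (rankOne (fun j => (c j)⁻¹ • v j)) ∈
        {r | ∃ u : ∀ j, Fin (d j) → ℝ, (∀ j, l2 (u j) ≤ 1) ∧ r = tinner W (rankOne u)} :=
      ⟨_, hunit, rfl⟩
    have h2 : tinner W (rankOne (fun j => (c j)⁻¹ • v j)) ≤ 1 :=
      le_trans (le_csSup (bddAbove_spectral W) hmem) hW
    calc (∏ j, c j) * tinner W (rankOne (fun j => (c j)⁻¹ • v j)) ≤ (∏ j, c j) * 1 :=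
          mul_le_mul_of_nonneg_left h2 (Finset.prod_nonneg (fun j _ => hc0 j))
      _ = ∏ j, c j := mul_one _

lemma onorm_pair (δ : Fin k → ℝ) (W : Tensor d) (B : ℝ) (hB : 0 ≤ B)
    (hW : onorm δ W ≤ B) (mA mB : Fin k) (hAB : mA ≠ mB)
    (v : ∀ j, Fin (d j) → ℝ)
    (hother : ∀ j, j ≠ mA → j ≠ mB → l2 (v j) ≤ 1 ∧ linf (v j) ≤ δ j) :
    tinner (rankOne v) W ≤ l2 (v mA) * l2 (v mB) * B := by
  have hnonneg : 0 ≤ l2 (v mA) * l2 (v mB) * B :=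
    mul_nonneg (mul_nonneg (l2_nonneg _) (l2_nonneg _)) hB
  by_cases hz : v mA = 0 ∨ v mB = 0
  · rcases hz with h | h
    · rw [rankOne_eq_zero mA h, tinner_zero_fun_left]
      exact hnonneg
    · rw [rankOne_eq_zero mB h, tinner_zero_fun_left]
      exact hnonneg
  · push_neg at hz
    set c : Fin k → ℝ := fun j => if j = mA then l2 (v mA) else if j = mB then l2 (v mB) else 1
      with hc
    have hl2pos : ∀ (j : Fin k), v j ≠ 0 → 0 < l2 (v j) := by
      intro j hj
      rcases lt_or_eq_of_le (l2_nonneg (v j)) with h | h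
      · exact h
      · exact absurd (l2_eq_zero h.symm) hj
    have hcval : ∀ j, c j = if j = mA then l2 (v mA) else if j = mB then l2 (v mB) else 1 :=
      fun j => rfl
    have hcpos : ∀ j, 0 < c j := by
      intro j
      rw [hcval j]
      by_cases ha1 : j = mA
      · subst ha1
        rw [if_pos rfl]
        exact hl2pos _ hz.1
      · by_cases ha2 : j = mB
        · subst ha2
          rw [if_neg ha1, if_pos rfl]
          exact hl2pos _ hz.2
        · rw [if_neg ha1, if_neg ha2]
          norm_num
    have hvv : (fun j => c j • ((c j)⁻¹ • v j)) = v := by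
      funext j
      rw [smul_smul, mul_inv_cancel₀ (ne_of_gt (hcpos j)), one_smul]
    have h1 : rankOne v = fun a => (∏ j, c j) * rankOne (fun j => (c j)⁻¹ • v j) a := by
      conv_lhs => rw [← hvv]
      exact rankOne_smul c _
    have hprodc : (∏ j, c j) = l2 (v mA) * l2 (v mB) := by
      rw [← Finset.mul_prod_erase Finset.univ c (Finset.mem_univ mA)]
      have hmem : mB ∈ Finset.univ.erase mA := Finset.mem_erase.mpr ⟨hAB.symm, Finset.mem_univ _⟩
      rw [← Finset.mul_prod_erase _ c hmem]
      have hrest : ∏ j ∈ (Finset.univ.erase mA).erase mB, c j = 1 := by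
        apply Finset.prod_eq_one
        intro j hj
        have h2 := Finset.mem_erase.mp hj
        have h3 := Finset.mem_erase.mp h2.2
        rw [hc]
        simp [h3.1, h2.1]
      rw [hrest, hc]
      simp [hAB.symm]
    -- the normalized tensor is in Uset
    have hunit : ∀ j, l2 ((c j)⁻¹ • v j) ≤ 1 := by
      intro j
      rw [l2_smul (le_of_lt (inv_pos.mpr (hcpos j))), hcval j]
      by_cases ha1 : j = mA
      · subst ha1
        rw [if_pos rfl, inv_mul_cancel₀ (ne_of_gt (hl2pos _ hz.1))]
      · by_cases ha2 : j = mB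
        · subst ha2
          rw [if_neg ha1, if_pos rfl, inv_mul_cancel₀ (ne_of_gt (hl2pos _ hz.2))]
        · rw [if_neg ha1, if_neg ha2, inv_one, one_mul]
          exact (hother j ha1 ha2).1
    have hlinf : ∀ j, j ≠ mA → j ≠ mB → linf ((c j)⁻¹ • v j) ≤ δ j := by
      intro j ha1 ha2
      have hcj : c j = 1 := by rw [hcval j, if_neg ha1, if_neg ha2]
      rw [hcj, inv_one, one_smul]
      exact (hother j ha1 ha2).2
    have hUmem : rankOne (fun j => (c j)⁻¹ • v j) ∈ Uset (d := d) δ := by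
      rcases lt_or_gt_of_ne hAB with hlt | hgt
      · exact ⟨mA, mB, hlt, _, hunit, fun j hj1 hj2 => hlinf j hj1 hj2, rfl⟩
      · exact ⟨mB, mA, hgt, _, hunit, fun j hj1 hj2 => hlinf j hj2 hj1, rfl⟩
    have hmem2 : tinner (rankOne (fun j => (c j)⁻¹ • v j)) W ∈
        {r | ∃ Y ∈ Uset (d := d) δ, r = tinner Y W} := ⟨_, hUmem, rfl⟩
    have h2 : tinner (rankOne (fun j => (c j)⁻¹ • v j)) W ≤ B :=
      le_trans (le_csSup (bddAbove_onorm δ W) hmem2) hW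
    rw [h1, tinner_mul_fun_left, hprodc]
    calc l2 (v mA) * l2 (v mB) * tinner (rankOne (fun j => (c j)⁻¹ • v j)) W
        ≤ l2 (v mA) * l2 (v mB) * B :=
          mul_le_mul_of_nonneg_left h2 (mul_nonneg (l2_nonneg _) (l2_nonneg _))

end NormBounds


section MoreAux

variable {k : ℕ} {d : Fin k → ℕ}

lemma tinner_sub_right (X Y Z : Tensor d) : tinner X (Y - Z) = tinner X Y - tinner X Z := by
  simp [tinner, Pi.sub_apply, mul_sub, Finset.sum_sub_distrib]

lemma tinner_sum_fun {ι : Type*} (s : Finset ι) (F : ι → Tensor d) (W : Tensor d) :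
    tinner (fun a => ∑ i ∈ s, F i a) W = ∑ i ∈ s, tinner (F i) W := by
  unfold tinner
  simp only [Finset.sum_mul]
  rw [Finset.sum_comm]

lemma tinner_sum_right {ι : Type*} (s : Finset ι) (F : ι → Tensor d) (W : Tensor d) :
    tinner W (∑ i ∈ s, F i) = ∑ i ∈ s, tinner W (F i) := by
  unfold tinner
  simp only [Finset.sum_apply, Finset.mul_sum]
  rw [Finset.sum_comm]

lemma split3_ite (y z : ℕ → ℝ) (p k : ℕ) (hp : p < k) :
    ∏ t ∈ Finset.range k, (if t = p then z t else y t)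
      = (∏ t ∈ Finset.Ico 0 p, y t) * (z p * ∏ t ∈ Finset.Ico (p+1) k, y t) := by
  rw [split3 (fun t => if t = p then z t else y t) p k hp]
  congr 1
  · apply Finset.prod_congr rfl
    intro t ht
    have := Finset.mem_Ico.mp ht
    rw [if_neg (by omega)]
  congr 1
  · rw [if_pos rfl]
  · apply Finset.prod_congr rfl
    intro t ht
    have := Finset.mem_Ico.mp ht
    rw [if_neg (by omega)]

lemma split5_ite (x y z : ℕ → ℝ) (p p' k : ℕ) (h1 : p < p') (h2 : p' < k) :
    ∏ t ∈ Finset.range k, (if t = p ∨ t = p' then z t else if t < p' then y t else x t)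
      = (∏ t ∈ Finset.Ico 0 p, y t) * (z p * ((∏ t ∈ Finset.Ico (p+1) p', y t) *
          (z p' * ∏ t ∈ Finset.Ico (p'+1) k, x t))) := by
  rw [split5 (fun t => if t = p ∨ t = p' then z t else if t < p' then y t else x t) p p' k h1 h2]
  congr 1
  · apply Finset.prod_congr rfl
    intro t ht
    have := Finset.mem_Ico.mp ht
    rw [if_neg (by omega), if_pos (by omega)]
  congr 1
  · rw [if_pos (Or.inl rfl)]
  congr 1
  · apply Finset.prod_congr rfl
    intro t ht
    have := Finset.mem_Ico.mp ht
    rw [if_neg (by omega), if_pos (by omega)]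
  congr 1
  · rw [if_pos (Or.inr rfl)]
  · apply Finset.prod_congr rfl
    intro t ht
    have := Finset.mem_Ico.mp ht
    rw [if_neg (by omega), if_neg (by omega)]

lemma exists_equiv (k : ℕ) (hk : 2 ≤ k) (j1 j2 : Fin k) (h : j1 ≠ j2) :
    ∃ e : Fin k ≃ Fin k, e ⟨0, by omega⟩ = j1 ∧ e ⟨1, by omega⟩ = j2 := by
  set z : Fin k := ⟨0, by omega⟩ with hzdef
  set o : Fin k := ⟨1, by omega⟩ with hodef
  have hzo : z ≠ o := by
    rw [hzdef, hodef, Ne, Fin.ext_iff]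
    norm_num
  set t := Equiv.swap z j1 with ht
  set b := t.symm j2 with hb
  have hbz : b ≠ z := by
    intro hcon
    have h2 : j2 = t z := by rw [← hcon, hb, Equiv.apply_symm_apply]
    rw [ht, Equiv.swap_apply_left] at h2
    exact h h2.symm
  set s := Equiv.swap o b with hs
  refine ⟨s.trans t, ?_, ?_⟩
  · show t (s z) = j1
    have hsz : s z = z := by
      rw [hs]
      exact Equiv.swap_apply_of_ne_of_ne hzo (Ne.symm hbz)
    rw [hsz, ht]
    exact Equiv.swap_apply_left z j1
  · show t (s o) = j2
    have hso : s o = b := by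
      rw [hs]
      exact Equiv.swap_apply_left o b
    rw [hso, hb, Equiv.apply_symm_apply]

lemma prodN_eq {k : ℕ} {d : Fin k → ℕ} (e : Fin k ≃ Fin k) (a : ∀ j, Fin (d j))
    (f : ∀ j, Fin (d j) → ℝ) (g : ℕ → ℝ)
    (hg : ∀ i : Fin k, g ↑i = f (e i) (a (e i))) :
    ∏ j, f j (a j) = ∏ t ∈ Finset.range k, g t := by
  rw [← Fin.prod_univ_eq_prod_range g k, ← Equiv.prod_comp e (fun j => f j (a j))]
  exact Finset.prod_congr rfl (fun i _ => (hg i).symm)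

lemma prodN_eq' {k : ℕ} (e : Fin k ≃ Fin k) (F : Fin k → ℝ) (g : ℕ → ℝ)
    (hg : ∀ i : Fin k, g ↑i = F (e i)) :
    ∏ j, F j = ∏ t ∈ Finset.range k, g t := by
  rw [← Fin.prod_univ_eq_prod_range g k, ← Equiv.prod_comp e F]
  exact Finset.prod_congr rfl (fun i _ => (hg i).symm)

end MoreAux

/-- key step in the proof of the subdifferential theorem: if `δ_j`
dominates the incoherence of `L_j(X)` for every `j`, `W₀` satisfies `Q⁰_X W₀ = W₀` and
`‖W₀‖ ≤ 1` (spectral norm), then for every `W₁` with `‖W₁‖_{∘,δ} ≤ 2/(k(k−1))` one has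
`‖W₀ + Q_X^⊥ W₁‖_{∘,δ} ≤ 1`. -/
theorem statement3 {k : ℕ} (hk : 2 ≤ k) {d : Fin k → ℕ} (X : Tensor d)
    (δ : Fin k → ℝ) (hδ : ∀ j, δ j ∈ Set.Ioc (0 : ℝ) 1)
    (hmax : ∀ j, ∀ u : EuclideanSpace ℝ (Fin (d j)), ‖u‖ ≤ 1 →
      linf (fun i => projMode X j u i) ≤ δ j)
    (W0 : Tensor d) (hW0 : Q0 X W0 = W0) (hW0norm : spectralNorm W0 ≤ 1) :
    ∀ W1 : Tensor d, onorm δ W1 ≤ 2 / ((k : ℝ) * ((k : ℝ) - 1)) →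
      onorm δ (W0 + Qperp X W1) ≤ 1 := by
  intro W1 hW1
  have hkR : (2:ℝ) ≤ (k:ℝ) := by exact_mod_cast hk
  have hkpos : (0:ℝ) < (k:ℝ) * ((k:ℝ) - 1) := by nlinarith
  set B : ℝ := 2 / ((k : ℝ) * ((k : ℝ) - 1)) with hBdef
  have hB0 : 0 ≤ B := by positivity
  apply Real.sSup_le _ zero_le_one
  rintro r ⟨Y, ⟨j1, j2, hj12, u, hu1, hu2, rfl⟩, rfl⟩
  -- projections of the factors
  set pp : ∀ j, Fin (d j) → ℝ := fun j => (Pmat X j).mulVec (u j) with hppdef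
  set qq : ∀ j, Fin (d j) → ℝ := fun j => u j - pp j with hqqdef
  have hpyth : ∀ j, l2 (pp j) ^ 2 + l2 (qq j) ^ 2 ≤ 1 := by
    intro j
    have h1 := pmat_pyth X j (u j)
    have hl2u : l2 (u j) ^ 2 ≤ 1 := by nlinarith [hu1 j, l2_nonneg (u j)]
    rw [hppdef, hqqdef]
    simp only []
    linarith [h1]
  have hppl2 : ∀ j, l2 (pp j) ≤ 1 := by
    intro j
    nlinarith [hpyth j, l2_nonneg (pp j), sq_nonneg (l2 (qq j))]
  have hpplinf : ∀ j, linf (pp j) ≤ δ j := by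
    intro j
    have hnorm : ‖(WithLp.toLp 2 (u j) : EuclideanSpace ℝ (Fin (d j)))‖ ≤ 1 := by
      rw [← l2_eq_norm]
      exact hu1 j
    have h2 := hmax j _ hnorm
    have heq : pp j = fun i => projMode X j (WithLp.toLp 2 (u j) : EuclideanSpace ℝ (Fin (d j))) i := by
      funext i
      rw [hppdef]
      exact Pmat_mulVec X j (u j) i
    rw [heq]
    exact h2
  -- the adapted ordering of the modes
  obtain ⟨e, he0, he1⟩ := exists_equiv k hk j1 j2 (ne_of_lt hj12)
  have hpos : ∀ i : Fin k, 2 ≤ (i:ℕ) → e i ≠ j1 ∧ e i ≠ j2 := by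
    intro i hi
    constructor
    · intro hcon
      rw [← he0] at hcon
      have h3 := e.injective hcon
      rw [Fin.ext_iff] at h3
      simp at h3
      omega
    · intro hcon
      rw [← he1] at hcon
      have h3 := e.injective hcon
      rw [Fin.ext_iff] at h3
      simp at h3
      omega
  -- the rank-one pieces of the decomposition
  set v : ℕ → ℕ → ∀ j, Fin (d j) → ℝ := fun p p' => fun j =>
    if ((e.symm j : ℕ) = p ∨ (e.symm j : ℕ) = p') then qq j
    else if ((e.symm j : ℕ) < p') then pp j else u j with hvdef
  -- the decomposition identity
  have hdecomp : Qperp X (rankOne u) = fun a => ∑ p ∈ Finset.range k,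
      ∑ p' ∈ Finset.Ico (p+1) k, rankOne (v p p') a := by
    funext a
    set x : ℕ → ℝ := fun t => if h : t < k then u (e ⟨t, h⟩) (a (e ⟨t, h⟩)) else 0 with hx
    set y : ℕ → ℝ := fun t => if h : t < k then pp (e ⟨t, h⟩) (a (e ⟨t, h⟩)) else 0 with hy
    set z : ℕ → ℝ := fun t => if h : t < k then qq (e ⟨t, h⟩) (a (e ⟨t, h⟩)) else 0 with hz
    have hxval : ∀ i : Fin k, x ↑i = u (e i) (a (e i)) := by
      intro i
      rw [hx]
      simp only []
      rw [dif_pos i.isLt]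
    have hyval : ∀ i : Fin k, y ↑i = pp (e i) (a (e i)) := by
      intro i
      rw [hy]
      simp only []
      rw [dif_pos i.isLt]
    have hzval : ∀ i : Fin k, z ↑i = qq (e i) (a (e i)) := by
      intro i
      rw [hz]
      simp only []
      rw [dif_pos i.isLt]
    have hxyz : ∀ t, z t = x t - y t := by
      intro t
      by_cases h : t < k
      · rw [hx, hy, hz]
        simp only [dif_pos h]
        rw [hqqdef]
        simp [Pi.sub_apply]
      · rw [hx, hy, hz]
        simp only [dif_neg h]
        ring
    have hL1 : rankOne u a = ∏ t ∈ Finset.range k, x t :=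
      prodN_eq e a u x hxval
    have hL2 : Q0 X (rankOne u) a = ∏ t ∈ Finset.range k, y t := by
      show kronApply (fun j => Pmat X j) (rankOne u) a = _
      rw [kron_rankOne]
      exact prodN_eq e a _ y hyval
    have hL3 : (∑ j : Fin k, kronApply
          (fun l => if l = j then 1 - Pmat X l else Pmat X l) (rankOne u)) a
        = ∑ p ∈ Finset.range k,
            ((∏ t ∈ Finset.Ico 0 p, y t) * (z p * ∏ t ∈ Finset.Ico (p+1) k, y t)) := by
      rw [Finset.sum_apply]
      have hterm : ∀ j : Fin k,
          kronApply (fun l => if l = j then 1 - Pmat X l else Pmat X l) (rankOne u) a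
            = rankOne (fun l => if l = j then qq l else pp l) a := by
        intro j
        rw [kron_rankOne]
        congr 1
        funext l
        by_cases h : l = j
        · rw [if_pos h, if_pos h, Matrix.sub_mulVec, Matrix.one_mulVec, hqqdef]
        · rw [if_neg h, if_neg h]
      have hstep : ∀ i : Fin k,
          rankOne (fun l => if l = e i then qq l else pp l) a
            = ∏ t ∈ Finset.range k, (if t = ↑i then z t else y t) := by
        intro i
        apply prodN_eq e a
        intro i'
        by_cases h : i' = i
        · subst h
          rw [if_pos rfl, if_pos rfl]
          exact hzval i'
        · rw [if_neg (fun hcon => h (Fin.ext hcon)), if_neg (by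
            intro hcon
            exact h (e.injective hcon))]
          exact hyval i'
      calc ∑ j : Fin k, kronApply
            (fun l => if l = j then 1 - Pmat X l else Pmat X l) (rankOne u) a
          = ∑ j : Fin k, rankOne (fun l => if l = j then qq l else pp l) a :=
            Finset.sum_congr rfl (fun j _ => hterm j)
        _ = ∑ i : Fin k, rankOne (fun l => if l = e i then qq l else pp l) a :=
            (Equiv.sum_comp e (fun j => rankOne (fun l => if l = j then qq l else pp l) a)).symm
        _ = ∑ i : Fin k,
              (fun p => ∏ t ∈ Finset.range k, (if t = p then z t else y t)) ↑i :=
            Finset.sum_congr rfl (fun i _ => hstep i)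
        _ = ∑ p ∈ Finset.range k, ∏ t ∈ Finset.range k, (if t = p then z t else y t) :=
            Fin.sum_univ_eq_sum_range
              (fun p => ∏ t ∈ Finset.range k, (if t = p then z t else y t)) k
        _ = ∑ p ∈ Finset.range k,
              ((∏ t ∈ Finset.Ico 0 p, y t) * (z p * ∏ t ∈ Finset.Ico (p+1) k, y t)) := by
            apply Finset.sum_congr rfl
            intro p hp
            exact split3_ite y z p k (Finset.mem_range.mp hp)
    have hR : ∑ p ∈ Finset.range k, ∑ p' ∈ Finset.Ico (p+1) k, rankOne (v p p') a
        = ∑ p ∈ Finset.range k, ∑ p' ∈ Finset.Ico (p+1) k,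
            (∏ t ∈ Finset.Ico 0 p, y t) * (z p *
              ((∏ t ∈ Finset.Ico (p+1) p', y t) *
                (z p' * ∏ t ∈ Finset.Ico (p'+1) k, x t))) := by
      apply Finset.sum_congr rfl
      intro p hp
      apply Finset.sum_congr rfl
      intro p' hp'
      have hpk := Finset.mem_range.mp hp
      have hp'k := Finset.mem_Ico.mp hp'
      have h5 : rankOne (v p p') a = ∏ t ∈ Finset.range k,
          (if t = p ∨ t = p' then z t else if t < p' then y t else x t) := by
        apply prodN_eq e a
        intro i'
        rw [hvdef]
        simp only [Equiv.symm_apply_apply]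
        by_cases h1 : (↑i' : ℕ) = p ∨ (↑i' : ℕ) = p'
        · rw [if_pos h1, if_pos h1]
          exact hzval i'
        · rw [if_neg h1, if_neg h1]
          by_cases h2 : (↑i' : ℕ) < p'
          · rw [if_pos h2, if_pos h2]
            exact hyval i'
          · rw [if_neg h2, if_neg h2]
            exact hxval i'
      rw [h5]
      exact split5_ite x y z p p' k (by omega) (by omega)
    have hQ : Qperp X (rankOne u) a = rankOne u a - (Q0 X (rankOne u) a
        + (∑ j : Fin k, kronApply
            (fun l => if l = j then 1 - Pmat X l else Pmat X l) (rankOne u)) a) := rfl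
    rw [hQ, hL1, hL2, hL3, hR]
    have hkey := keyId k x y z hxyz
    linarith [hkey]
  -- symmetry of the matrices involved
  have hPsymm : ∀ (j : Fin k) (a b : Fin (d j)), Pmat X j a b = Pmat X j b a :=
    fun j a b => Pmat_symm X j a b
  have hPsymm' : ∀ (j0 : Fin k) (l : Fin k) (a b : Fin (d l)),
      (if l = j0 then 1 - Pmat X l else Pmat X l) a b
        = (if l = j0 then 1 - Pmat X l else Pmat X l) b a := by
    intro j0 l a b
    by_cases h : l = j0
    · rw [if_pos h]
      have h1 : (1 - Pmat X l) a b = (if a = b then 1 else 0) - Pmat X l a b := by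
        simp [Matrix.sub_apply, Matrix.one_apply]
      have h2 : (1 - Pmat X l) b a = (if b = a then 1 else 0) - Pmat X l b a := by
        simp [Matrix.sub_apply, Matrix.one_apply]
      rw [h1, h2, Pmat_symm X l a b]
      congr 2
      simp [eq_comm]
    · rw [if_neg h]
      exact Pmat_symm X l a b
  -- the ⟨Y, W0⟩ bound
  have hYW0 : tinner (rankOne u) W0 ≤ ∏ j, l2 (pp j) := by
    rw [tinner_comm, ← hW0]
    have h1 : tinner (Q0 X W0) (rankOne u) = tinner W0 (Q0 X (rankOne u)) :=
      tinner_kron (fun j => Pmat X j) hPsymm W0 (rankOne u)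
    rw [h1]
    have h2 : Q0 X (rankOne u) = rankOne pp := by
      show kronApply (fun j => Pmat X j) (rankOne u) = _
      rw [kron_rankOne]
    rw [h2]
    exact spectral_le W0 hW0norm pp (fun j => l2 (pp j)) (fun j => l2_nonneg _)
      (fun j => le_refl _)
  -- move Qperp to the other side
  have hadj : tinner (rankOne u) (Qperp X W1) = tinner (Qperp X (rankOne u)) W1 := by
    have e0 : tinner (rankOne u) W1 = tinner W1 (rankOne u) := tinner_comm _ _
    have e1 : tinner (rankOne u) (Q0 X W1) = tinner W1 (Q0 X (rankOne u)) := by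
      rw [tinner_comm]
      exact tinner_kron (fun j => Pmat X j) hPsymm W1 (rankOne u)
    have e2 : ∀ j : Fin k, tinner (rankOne u)
          (kronApply (fun l => if l = j then 1 - Pmat X l else Pmat X l) W1)
        = tinner W1 (kronApply (fun l => if l = j then 1 - Pmat X l else Pmat X l)
            (rankOne u)) := by
      intro j
      rw [tinner_comm]
      exact tinner_kron _ (hPsymm' j) W1 (rankOne u)
    have expand1 : tinner (rankOne u) (Qperp X W1)
        = tinner (rankOne u) W1 - (tinner (rankOne u) (Q0 X W1)
            + ∑ j : Fin k, tinner (rankOne u)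
                (kronApply (fun l => if l = j then 1 - Pmat X l else Pmat X l) W1)) := by
      show tinner (rankOne u) (W1 - (Q0 X W1 + ∑ j : Fin k,
          kronApply (fun l => if l = j then 1 - Pmat X l else Pmat X l) W1)) = _
      rw [tinner_sub_right, tinner_add_right, tinner_sum_right]
    have expand2 : tinner (Qperp X (rankOne u)) W1
        = tinner W1 (rankOne u) - (tinner W1 (Q0 X (rankOne u))
            + ∑ j : Fin k, tinner W1
                (kronApply (fun l => if l = j then 1 - Pmat X l else Pmat X l) (rankOne u))) := by
      rw [tinner_comm]
      show tinner W1 (rankOne u - (Q0 X (rankOne u) + ∑ j : Fin k,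
          kronApply (fun l => if l = j then 1 - Pmat X l else Pmat X l) (rankOne u))) = _
      rw [tinner_sub_right, tinner_add_right, tinner_sum_right]
    have e3 : ∑ j : Fin k, tinner (rankOne u)
          (kronApply (fun l => if l = j then 1 - Pmat X l else Pmat X l) W1)
        = ∑ j : Fin k, tinner W1
            (kronApply (fun l => if l = j then 1 - Pmat X l else Pmat X l) (rankOne u)) :=
      Finset.sum_congr rfl (fun j _ => e2 j)
    rw [expand1, expand2, e0, e1, e3]
  -- scalar sequences for the final bound
  set aN : ℕ → ℝ := fun t => if h : t < k then l2 (pp (e ⟨t, h⟩)) else 0 with haN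
  set bN : ℕ → ℝ := fun t => if h : t < k then l2 (qq (e ⟨t, h⟩)) else 0 with hbN
  have haN0 : ∀ t, 0 ≤ aN t := by
    intro t
    rw [haN]
    by_cases h : t < k
    · simp only [dif_pos h]
      exact l2_nonneg _
    · simp [dif_neg h]
  have hbN0 : ∀ t, 0 ≤ bN t := by
    intro t
    rw [hbN]
    by_cases h : t < k
    · simp only [dif_pos h]
      exact l2_nonneg _
    · simp [dif_neg h]
  have hab1 : ∀ t, t < k → aN t ^ 2 + bN t ^ 2 ≤ 1 := by
    intro t ht
    rw [haN, hbN]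
    simp only [dif_pos ht]
    exact hpyth _
  -- the ⟨Qperp Y, W1⟩ bound
  have hQperpBound : tinner (Qperp X (rankOne u)) W1
      ≤ ∑ p ∈ Finset.range k, ∑ p' ∈ Finset.Ico (p+1) k, (bN p * bN p' * B) := by
    rw [hdecomp]
    rw [tinner_sum_fun]
    apply Finset.sum_le_sum
    intro p hp
    have hterm : (fun a => ∑ p' ∈ Finset.Ico (p+1) k, rankOne (v p p') a)
        = fun a => ∑ p' ∈ Finset.Ico (p+1) k, rankOne (v p p') a := rfl
    rw [tinner_sum_fun]
    apply Finset.sum_le_sum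
    intro p' hp'
    have hpk : p < k := Finset.mem_range.mp hp
    have hp'I := Finset.mem_Ico.mp hp'
    have hp'k : p' < k := hp'I.2
    have hpp' : p < p' := by omega
    set mA : Fin k := e ⟨p, hpk⟩ with hmA
    set mB : Fin k := e ⟨p', hp'k⟩ with hmB
    have hABne : mA ≠ mB := by
      rw [hmA, hmB]
      intro hcon
      have := e.injective hcon
      rw [Fin.ext_iff] at this
      simp at this
      omega
    have hvmA : v p p' mA = qq mA := by
      rw [hvdef, hmA]
      simp only [Equiv.symm_apply_apply]
      simp
    have hvmB : v p p' mB = qq mB := by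
      rw [hvdef, hmB]
      simp only [Equiv.symm_apply_apply]
      simp
    have hother : ∀ j, j ≠ mA → j ≠ mB → l2 (v p p' j) ≤ 1 ∧ linf (v p p' j) ≤ δ j := by
      intro j hj1 hj2
      have hji : j = e (e.symm j) := (e.apply_symm_apply j).symm
      have hip : ((e.symm j : ℕ)) ≠ p := by
        intro hcon
        apply hj1
        rw [hji, hmA]
        congr 1
        exact Fin.ext hcon
      have hip' : ((e.symm j : ℕ)) ≠ p' := by
        intro hcon
        apply hj2
        rw [hji, hmB]
        congr 1
        exact Fin.ext hcon
      have hv1 : v p p' j = if ((e.symm j : ℕ) < p') then pp j else u j := by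
        rw [hvdef]
        simp only []
        rw [if_neg (by tauto)]
      by_cases hlt : ((e.symm j : ℕ)) < p'
      · rw [hv1, if_pos hlt]
        constructor
        · nlinarith [hpyth j, l2_nonneg (pp j), sq_nonneg (l2 (qq j))]
        · exact hpplinf j
      · rw [hv1, if_neg hlt]
        have hge2 : 2 ≤ ((e.symm j : ℕ)) := by omega
        have hne := hpos (e.symm j) hge2
        rw [← hji] at hne
        exact ⟨hu1 j, hu2 j hne.1 hne.2⟩
    have hbound := onorm_pair δ W1 B hB0 hW1 mA mB hABne (v p p') hother
    rw [hvmA, hvmB] at hbound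
    have hbNp : bN p = l2 (qq mA) := by
      rw [hbN]
      simp only [dif_pos hpk]
      rw [hmA]
    have hbNp' : bN p' = l2 (qq mB) := by
      rw [hbN]
      simp only [dif_pos hp'k]
      rw [hmB]
    rw [hbNp, hbNp']
    exact hbound
  -- put everything together
  have hsplit : tinner (rankOne u) (W0 + Qperp X W1)
      = tinner (rankOne u) W0 + tinner (rankOne u) (Qperp X W1) :=
    tinner_add_right _ _ _
  have hprodaN : ∏ j, l2 (pp j) = ∏ t ∈ Finset.range k, aN t := by
    apply prodN_eq' e
    intro i
    rw [haN]
    simp only [dif_pos i.isLt]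
  calc tinner (rankOne u) (W0 + Qperp X W1)
      = tinner (rankOne u) W0 + tinner (rankOne u) (Qperp X W1) := hsplit
    _ ≤ (∏ t ∈ Finset.range k, aN t)
        + ∑ p ∈ Finset.range k, ∑ p' ∈ Finset.Ico (p+1) k, (bN p * bN p' * B) := by
        rw [← hprodaN]
        have h2 : tinner (rankOne u) (Qperp X W1)
            ≤ ∑ p ∈ Finset.range k, ∑ p' ∈ Finset.Ico (p+1) k, (bN p * bN p' * B) := by
          rw [hadj]
          exact hQperpBound
        linarith [hYW0, h2]
    _ ≤ 1 := finalIneq k hk aN bN haN0 hbN0 hab1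

end IncoherentTensor
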